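/- Every connected graph of order n ≥ 4 with exactly n-2 pending vertices has eccentric connectivity index equal to 5n - 6. -/

import Mathlib

open SimpleGraph Finset

/-- Degree of a vertex (classically decidable adjacency). -/
noncomputable def deg {V : Type*} (G : SimpleGraph V) [Fintype V] (v : V) : ℕ :=
  letI := Classical.decRel G.Adj; G.degree v

/-- Eccentricity of a vertex: maximum distance to any vertex. -/
noncomputable def ecc {V : Type*} (G : SimpleGraph V) [Fintype V] (v : V) : ℕ :=
  Finset.univ.sup (fun w => G.dist v w)

/-- Eccentric connectivity index. -/
noncomputable def eci {V : Type*} (G : SimpleGraph V) [Fintype V] : ℕ :=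
  ∑ v, deg G v * ecc G v

/-- Number of pending vertices (vertices of degree 1). -/
noncomputable def pendingCount {V : Type*} (G : SimpleGraph V) [Fintype V] : ℕ :=
  (Finset.univ.filter (fun v => deg G v = 1)).card

set_option linter.unusedSectionVars false


lemma adj_eq_of_deg1 {V : Type*} (G : SimpleGraph V) [Fintype V] [DecidableRel G.Adj]
    {v x y : V} (h : G.degree v = 1) (hx : G.Adj v x) (hy : G.Adj v y) : x = y := by
  rw [← card_neighborFinset_eq_degree, Finset.card_eq_one] at h
  obtain ⟨c, hcEq⟩ := h
  have hx' : x ∈ G.neighborFinset v := by simpa using hx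
  have hy' : y ∈ G.neighborFinset v := by simpa using hy
  rw [hcEq, Finset.mem_singleton] at hx' hy'
  rw [hx', hy']

lemma exists_mid_of_dist_eq_two {V : Type*} (G : SimpleGraph V) {u v : V}
    (h : G.dist u v = 2) : ∃ w, G.Adj u w ∧ G.Adj w v := by
  have hne : G.dist u v ≠ 0 := by omega
  obtain ⟨w, hw⟩ := (SimpleGraph.Reachable.of_dist_ne_zero hne).exists_walk_length_eq_dist
  rw [h] at hw
  cases w with
  | nil => simp at hw
  | cons h1 w1 =>
    cases w1 with
    | nil => simp at hw
    | cons h2 w2 =>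
      have hz : w2.length = 0 := by simp only [SimpleGraph.Walk.length_cons] at hw; omega
      have := SimpleGraph.Walk.eq_of_length_eq_zero hz
      subst this
      exact ⟨_, h1, h2⟩

section Side
variable {V : Type*} (G : SimpleGraph V) [Fintype V] [DecidableRel G.Adj]
  (hc : G.Connected) {a b : V} (hadj : G.Adj a b)
  (hnbr : ∀ p, G.degree p = 1 → ∀ x, G.Adj p x → x = a ∨ x = b)
  (hclass : ∀ v, v ≠ a → v ≠ b → G.degree v = 1)
  (hpos : ∀ v : V, ∃ w, G.Adj v w)

include hc hadj hnbr hclass hpos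

lemma dist_center_le (v : V) : G.dist a v ≤ 2 := by
  by_cases hva : v = a
  · simp [hva, SimpleGraph.dist_self]
  by_cases hvb : v = b
  · rw [hvb, SimpleGraph.dist_eq_one_iff_adj.mpr hadj]; omega
  have hv1 : G.degree v = 1 := hclass v hva hvb
  obtain ⟨x, hx⟩ := hpos v
  rcases hnbr v hv1 x hx with h | h
  · rw [h] at hx
    rw [SimpleGraph.dist_comm, SimpleGraph.dist_eq_one_iff_adj.mpr hx]; omega
  · rw [h] at hx
    calc G.dist a v ≤ G.dist a b + G.dist b v := hc.dist_triangle
      _ ≤ 1 + 1 := by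
          rw [SimpleGraph.dist_eq_one_iff_adj.mpr hadj,
            SimpleGraph.dist_eq_one_iff_adj.mpr hx.symm]
      _ ≤ 2 := by omega

lemma not_adj_far {q : V} (hq : G.Adj b q) (hqa : q ≠ a) : ¬ G.Adj a q := by
  intro hcon
  have hqb : q ≠ b := fun he => G.irrefl (he ▸ hq)
  have hq1 : G.degree q = 1 := hclass q hqa hqb
  exact G.ne_of_adj hadj (adj_eq_of_deg1 G hq1 hcon.symm hq.symm)

lemma dist_far {q : V} (hq : G.Adj b q) (hqa : q ≠ a) : G.dist a q = 2 := by
  have hle : G.dist a q ≤ 2 :=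
    dist_center_le G hc hadj hnbr hclass hpos q
  have h0 : G.dist a q ≠ 0 := by
    rw [SimpleGraph.dist_ne_zero_iff_ne_and_reachable]
    exact ⟨fun h => hqa h.symm, hc a q⟩
  have h1 : G.dist a q ≠ 1 := fun h =>
    not_adj_far G hc hadj hnbr hclass hpos hq hqa (SimpleGraph.dist_eq_one_iff_adj.mp h)
  omega

lemma dist_pending_le {p : V} (hpa : G.Adj a p) (v : V) : G.dist p v ≤ 3 := by
  calc G.dist p v ≤ G.dist p a + G.dist a v := hc.dist_triangle
    _ ≤ 1 + 2 := by
        have := dist_center_le G hc hadj hnbr hclass hpos v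
        rw [SimpleGraph.dist_eq_one_iff_adj.mpr hpa.symm]
        omega
    _ ≤ 3 := by omega

lemma dist_pending_far {p q : V} (hp1 : G.degree p = 1) (hpa : G.Adj a p)
    (hq : G.Adj b q) (hqa : q ≠ a) : G.dist p q = 3 := by
  have hab : a ≠ b := G.ne_of_adj hadj
  have hqb : q ≠ b := fun he => G.irrefl (he ▸ hq)
  have hq1 : G.degree q = 1 := hclass q hqa hqb
  have hnaq : ¬ G.Adj a q := not_adj_far G hc hadj hnbr hclass hpos hq hqa
  have hpq : p ≠ q := fun he => hnaq (he ▸ hpa)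
  have hle : G.dist p q ≤ 3 := dist_pending_le G hc hadj hnbr hclass hpos hpa q
  have h0 : G.dist p q ≠ 0 := by
    rw [SimpleGraph.dist_ne_zero_iff_ne_and_reachable]
    exact ⟨hpq, hc p q⟩
  have h1 : G.dist p q ≠ 1 := by
    intro h
    have hadjpq := SimpleGraph.dist_eq_one_iff_adj.mp h
    have : q = a := adj_eq_of_deg1 G hp1 hadjpq hpa.symm
    exact hqa this
  have h2 : G.dist p q ≠ 2 := by
    intro h
    obtain ⟨w, hw1, hw2⟩ := exists_mid_of_dist_eq_two G h
    have hwa : w = a := adj_eq_of_deg1 G hp1 hw1 hpa.symm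
    have hwb : w = b := adj_eq_of_deg1 G hq1 hw2.symm hq.symm
    exact hab (hwa ▸ hwb ▸ rfl)
  omega

lemma center_degree_eq [DecidableEq V] : G.degree a = (Finset.univ.filter (fun p => G.Adj a p ∧ p ≠ b)).card + 1 := by
  classical
  rw [← card_neighborFinset_eq_degree, neighborFinset_eq_filter]
  have : (Finset.univ.filter (G.Adj a)) = insert b (Finset.univ.filter (fun p => G.Adj a p ∧ p ≠ b)) := by
    ext x
    simp only [Finset.mem_filter, Finset.mem_univ, true_and, Finset.mem_insert]
    constructor
    · intro hx
      by_cases hxb : x = b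
      · exact Or.inl hxb
      · exact Or.inr ⟨hx, hxb⟩
    · rintro (rfl | ⟨hx, _⟩)
      · exact hadj
      · exact hx
  rw [this, Finset.card_insert_of_notMem (by simp)]

end Side

-- no two pending vertices adjacent (when ≥ 3 vertices and connected)
lemma no_pending_adj {V : Type*} (G : SimpleGraph V) [Fintype V] [DecidableRel G.Adj]
    (hc : G.Connected) (hcard : 3 ≤ Fintype.card V)
    {p q : V} (hp : G.degree p = 1) (hq : G.degree q = 1) : ¬ G.Adj p q := by
  classical
  intro hadj
  have hpq : p ≠ q := G.ne_of_adj hadj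
  -- find r outside {p, q}
  have : ∃ r : V, r ≠ p ∧ r ≠ q := by
    by_contra hno
    push_neg at hno
    have hsub : (Finset.univ : Finset V) ⊆ {p, q} := by
      intro r _
      by_cases h : r = p
      · simp [h]
      · simp [hno r h]
    have := Finset.card_le_card hsub
    have hle : Fintype.card V ≤ 2 := by
      calc Fintype.card V = Finset.univ.card := rfl
        _ ≤ ({p, q} : Finset V).card := this
        _ ≤ 2 := Finset.card_insert_le _ _ |>.trans (by simp)
    omega
  obtain ⟨r, hrp, hrq⟩ := this
  -- every walk from a vertex in {p,q} to r is impossible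
  have key : ∀ m (x : V), (x = p ∨ x = q) → ∀ w : G.Walk x r, w.length ≤ m → False := by
    intro m
    induction m with
    | zero =>
      intro x hx w hw
      have := SimpleGraph.Walk.eq_of_length_eq_zero (Nat.le_zero.mp hw)
      rcases hx with h | h <;> subst h <;> subst this <;> [exact hrp rfl; exact hrq rfl]
    | succ m ih =>
      intro x hx w hw
      cases w with
      | nil =>
        rcases hx with h | h <;> subst h <;> [exact hrp rfl; exact hrq rfl]
      | @cons _ y _ h w' =>
        have hy : y = p ∨ y = q := by
          rcases hx with h' | h' <;> subst h'
          · right; exact adj_eq_of_deg1 G hp h hadj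
          · left; exact adj_eq_of_deg1 G hq h hadj.symm
        exact ih y hy w' (by simp [SimpleGraph.Walk.length_cons] at hw ⊢; omega)
  obtain ⟨w⟩ := hc p r
  exact key w.length p (Or.inl rfl) w le_rfl

-- the two centers are adjacent
lemma centers_adj {V : Type*} (G : SimpleGraph V) [Fintype V] [DecidableRel G.Adj]
    (hc : G.Connected) {a b : V} (hab : a ≠ b)
    (hclass : ∀ v : V, v ≠ a → v ≠ b → G.degree v = 1) : G.Adj a b := by
  have key : ∀ m (w : G.Walk a b), w.length ≤ m → G.Adj a b := by
    intro m
    induction m with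
    | zero =>
      intro w hw
      exact absurd (SimpleGraph.Walk.eq_of_length_eq_zero (Nat.le_zero.mp hw)) hab
    | succ m ih =>
      intro w hw
      cases w with
      | nil => exact absurd rfl hab
      | @cons _ x _ h w' =>
        by_cases hxb : x = b
        · subst hxb; exact h
        · have hxa : x ≠ a := fun he => G.irrefl (he ▸ h)
          have hx1 : G.degree x = 1 := hclass x hxa hxb
          cases w' with
          | nil => exact absurd rfl hxb
          | @cons _ y _ h2 w'' =>
            have hy : y = a := adj_eq_of_deg1 G hx1 h2 h.symm
            subst hy
            exact ih w'' (by simp [SimpleGraph.Walk.length_cons] at hw ⊢; omega)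
  obtain ⟨w⟩ := hc a b
  exact key w.length w le_rfl


theorem stmt8 (n : ℕ) (hn : 4 ≤ n) (G : SimpleGraph (Fin n)) (hc : G.Connected)
    (hp : pendingCount G = n - 2) :
    eci G = 5 * n - 6 := by
  letI := Classical.decRel G.Adj
  have hcard : Fintype.card (Fin n) = n := Fintype.card_fin n
  -- positive degrees
  have hpos : ∀ v : Fin n, ∃ w, G.Adj v w := by
    intro v
    have : Nontrivial (Fin n) := Fintype.one_lt_card_iff_nontrivial.mp (by omega)
    obtain ⟨u, hu⟩ := exists_ne v
    obtain ⟨w⟩ := hc v u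
    cases w with
    | nil => exact absurd rfl hu.symm
    | cons h _ => exact ⟨_, h⟩
  -- pending/non-pending counts
  have hP : (Finset.univ.filter (fun v : Fin n => G.degree v = 1)).card = n - 2 := hp
  have hsplitc := Finset.card_filter_add_card_filter_not
    (s := (Finset.univ : Finset (Fin n))) (p := fun v => G.degree v = 1)
  rw [Finset.card_univ, hcard, hP] at hsplitc
  have hS2 : (Finset.univ.filter (fun v : Fin n => ¬ G.degree v = 1)).card = 2 := by omega
  obtain ⟨a, b, hab, hSeq⟩ := Finset.card_eq_two.mp hS2
  have hmemS : ∀ v : Fin n, ¬ G.degree v = 1 ↔ (v = a ∨ v = b) := by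
    intro v
    constructor
    · intro hv
      have : v ∈ Finset.univ.filter (fun v : Fin n => ¬ G.degree v = 1) := by
        simp [hv]
      rw [hSeq] at this; simpa using this
    · intro hv
      have : v ∈ ({a, b} : Finset (Fin n)) := by simpa using hv
      rw [← hSeq] at this
      simpa using this
  have hclass : ∀ v : Fin n, v ≠ a → v ≠ b → G.degree v = 1 := by
    intro v hva hvb
    by_contra h
    rcases (hmemS v).mp h with h' | h' <;> [exact hva h'; exact hvb h']
  have ha1 : ¬ G.degree a = 1 := (hmemS a).mpr (Or.inl rfl)
  have hb1 : ¬ G.degree b = 1 := (hmemS b).mpr (Or.inr rfl)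
  have hadj : G.Adj a b := centers_adj G hc hab hclass
  have hnbr : ∀ p, G.degree p = 1 → ∀ x, G.Adj p x → x = a ∨ x = b := by
    intro p hp1 x hx
    by_contra h
    push_neg at h
    exact no_pending_adj G hc (by rw [hcard]; omega) hp1 (hclass x h.1 h.2) hx
  -- swapped versions
  have hclass' : ∀ v : Fin n, v ≠ b → v ≠ a → G.degree v = 1 := fun v h1 h2 => hclass v h2 h1
  have hnbr' : ∀ p, G.degree p = 1 → ∀ x, G.Adj p x → x = b ∨ x = a :=
    fun p h x hx => (hnbr p h x hx).symm
  -- degrees ≥ 2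
  have ha2 : 2 ≤ G.degree a := by
    have := G.degree_pos_iff_exists_adj a |>.mpr (hpos a); omega
  have hb2 : 2 ≤ G.degree b := by
    have := G.degree_pos_iff_exists_adj b |>.mpr (hpos b); omega
  -- pendant neighbors on each side
  have hex : ∀ c d : Fin n, 2 ≤ G.degree c → ∃ q, G.Adj c q ∧ q ≠ d := by
    intro c d h2
    rw [← card_neighborFinset_eq_degree] at h2
    obtain ⟨x, hx, y, hy, hxy⟩ := Finset.one_lt_card.mp (lt_of_lt_of_le one_lt_two h2)
    rw [SimpleGraph.mem_neighborFinset] at hx hy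
    by_cases hxd : x = d
    · exact ⟨y, hy, fun h => hxy (hxd.trans h.symm)⟩
    · exact ⟨x, hx, hxd⟩
  obtain ⟨qb, hqb, hqba⟩ := hex b a hb2
  obtain ⟨qa, hqa, hqab⟩ := hex a b ha2
  -- eccentricities of centers
  have hecca : ecc G a = 2 := by
    apply le_antisymm
    · exact Finset.sup_le fun v _ => dist_center_le G hc hadj hnbr hclass hpos v
    · have h2 : G.dist a qb = 2 := dist_far G hc hadj hnbr hclass hpos hqb hqba
      calc (2:ℕ) = G.dist a qb := h2.symm
        _ ≤ _ := Finset.le_sup (Finset.mem_univ qb)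
  have heccb : ecc G b = 2 := by
    apply le_antisymm
    · exact Finset.sup_le fun v _ => dist_center_le G hc hadj.symm hnbr' hclass' hpos v
    · have h2 : G.dist b qa = 2 := dist_far G hc hadj.symm hnbr' hclass' hpos hqa hqab
      calc (2:ℕ) = G.dist b qa := h2.symm
        _ ≤ _ := Finset.le_sup (Finset.mem_univ qa)
  -- eccentricities of pendants
  have heccp : ∀ p : Fin n, G.degree p = 1 → ecc G p = 3 := by
    intro p hp1
    obtain ⟨x, hx⟩ := hpos p
    rcases hnbr p hp1 x hx with rfl | rfl
    · apply le_antisymm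
      · exact Finset.sup_le fun v _ => dist_pending_le G hc hadj hnbr hclass hpos hx.symm v
      · have h3 : G.dist p qb = 3 :=
          dist_pending_far G hc hadj hnbr hclass hpos hp1 hx.symm hqb hqba
        calc (3:ℕ) = G.dist p qb := h3.symm
          _ ≤ _ := Finset.le_sup (Finset.mem_univ qb)
    · apply le_antisymm
      · exact Finset.sup_le fun v _ => dist_pending_le G hc hadj.symm hnbr' hclass' hpos hx.symm v
      · have h3 : G.dist p qa = 3 :=
          dist_pending_far G hc hadj.symm hnbr' hclass' hpos hp1 hx.symm hqa hqab
        calc (3:ℕ) = G.dist p qa := h3.symm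
          _ ≤ _ := Finset.le_sup (Finset.mem_univ qa)
  -- degree sum of centers
  have hdega : G.degree a = (Finset.univ.filter (fun p => G.Adj a p ∧ p ≠ b)).card + 1 :=
    center_degree_eq G hc hadj hnbr hclass hpos
  have hdegb : G.degree b = (Finset.univ.filter (fun p => G.Adj b p ∧ p ≠ a)).card + 1 :=
    center_degree_eq G hc hadj.symm hnbr' hclass' hpos
  have hQunion : (Finset.univ.filter (fun p => G.Adj a p ∧ p ≠ b)) ∪
      (Finset.univ.filter (fun p => G.Adj b p ∧ p ≠ a)) =
      Finset.univ.filter (fun v : Fin n => G.degree v = 1) := by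
    ext v
    simp only [Finset.mem_union, Finset.mem_filter, Finset.mem_univ, true_and]
    constructor
    · rintro (⟨hv, hvb⟩ | ⟨hv, hva⟩)
      · exact hclass v (fun h => G.irrefl (h ▸ hv)) hvb
      · exact hclass v hva (fun h => G.irrefl (h ▸ hv))
    · intro hv1
      obtain ⟨x, hx⟩ := hpos v
      rcases hnbr v hv1 x hx with rfl | rfl
      · exact Or.inl ⟨hx.symm, fun h => hb1 (h ▸ hv1)⟩
      · exact Or.inr ⟨hx.symm, fun h => ha1 (h ▸ hv1)⟩
  have hQdisj : Disjoint (Finset.univ.filter (fun p => G.Adj a p ∧ p ≠ b))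
      (Finset.univ.filter (fun p => G.Adj b p ∧ p ≠ a)) := by
    rw [Finset.disjoint_left]
    intro p hpA hpB
    simp only [Finset.mem_filter, Finset.mem_univ, true_and] at hpA hpB
    have hp1 : G.degree p = 1 := hclass p (fun h => G.irrefl (h ▸ hpA.1)) hpA.2
    exact hab (adj_eq_of_deg1 G hp1 hpA.1.symm hpB.1.symm)
  have hdsum : G.degree a + G.degree b = n := by
    have hcu := Finset.card_union_of_disjoint hQdisj
    rw [hQunion, hP] at hcu
    omega
  -- the sum
  have hsum : eci G = ∑ v, G.degree v * ecc G v := rfl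
  rw [hsum]
  rw [← Finset.sum_filter_add_sum_filter_not Finset.univ (fun v => G.degree v = 1)]
  have h1 : ∑ v ∈ Finset.univ.filter (fun v : Fin n => G.degree v = 1),
      G.degree v * ecc G v = (n - 2) * 3 := by
    rw [Finset.sum_congr rfl (fun p hps => by
      simp only [Finset.mem_filter] at hps
      rw [hps.2, heccp p hps.2, one_mul])]
    rw [Finset.sum_const, hP, smul_eq_mul]
  have h2 : ∑ v ∈ Finset.univ.filter (fun v : Fin n => ¬ G.degree v = 1),
      G.degree v * ecc G v = 2 * n := by
    rw [hSeq, Finset.sum_pair hab, hecca, heccb]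
    omega
  rw [h1, h2]
  omega
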